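/- Let E be a symmetric Banach sequence space, α a bounded complex sequence and σ(k) = α(k)^{1/n} (a choice of n-th root coordinatewise in modulus, |σ(k)| = |α(k)|^{1/n}). Then the diagonal n-linear form Tα : Eⁿ → ℂ is bounded if and only if the diagonal operator D_σ : E → ℓⁿ, D_σ(x) = (σ(k)x(k))ₖ, is bounded, and ‖Tα‖ = ‖D_σ‖^n. -/

import Mathlib

/-- A symmetric Banach sequence space. -/
structure SymmBSS where
  mem : (ℕ → ℂ) → Prop
  nrm : (ℕ → ℂ) → ℝ
  nrm_nonneg : ∀ x, 0 ≤ nrm x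
  solid : ∀ x y : ℕ → ℂ, (∀ k, ‖x k‖ ≤ ‖y k‖) → mem y → mem x ∧ nrm x ≤ nrm y
  symm : ∀ (x : ℕ → ℂ) (e : ℕ ≃ ℕ), mem x → mem (x ∘ e) ∧ nrm (x ∘ e) = nrm x
  add_mem : ∀ x y : ℕ → ℂ, mem x → mem y → mem (x + y) ∧ nrm (x + y) ≤ nrm x + nrm y
  smul_mem : ∀ (c : ℂ) (x : ℕ → ℂ), mem x → mem (c • x) ∧ nrm (c • x) = ‖c‖ * nrm x
  mem_of_l1 : ∀ x : ℕ → ℂ, Summable (fun k => ‖x k‖) → mem x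
  bdd_of_mem : ∀ x : ℕ → ℂ, mem x → BddAbove (Set.range fun k => ‖x k‖)



private lemma aux_amgm (n : ℕ) (hn : 0 < n) (a : Fin n → ℝ) (ha : ∀ i, 0 ≤ a i) :
    ∏ i, a i ≤ (1 / (n : ℝ)) * ∑ i, a i ^ n := by
  have hn' : (n : ℝ) ≠ 0 := Nat.cast_ne_zero.mpr hn.ne'
  have key := Real.geom_mean_le_arith_mean_weighted Finset.univ
    (fun _ : Fin n => 1 / (n : ℝ)) (fun i => a i ^ n)
    (fun i _ => by positivity)
    (by simp [Finset.card_univ, mul_comm, hn'])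
    (fun i _ => pow_nonneg (ha i) n)
  calc ∏ i, a i = ∏ i, ((a i ^ n : ℝ) ^ (1 / (n : ℝ))) := by
        refine Finset.prod_congr rfl fun i _ => ?_
        rw [← Real.rpow_natCast (a i) n, ← Real.rpow_mul (ha i), mul_one_div,
          div_self hn', Real.rpow_one]
    _ ≤ ∑ i, (1 / (n : ℝ)) * a i ^ n := key
    _ = (1 / (n : ℝ)) * ∑ i, a i ^ n := by rw [Finset.mul_sum]

private lemma aux_keyA (E : SymmBSS) (n : ℕ) (hn : 0 < n) (α σ : ℕ → ℂ)
    (hσ : ∀ k, σ k ^ n = α k) (C : ℝ) (hC : 0 ≤ C)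
    (hA : ∀ x : Fin n → ℕ → ℂ, (∀ i, E.mem (x i)) →
      ‖∑' k, α k * ∏ i, x i k‖ ≤ C * ∏ i, E.nrm (x i))
    (x : ℕ → ℂ) (hx : E.mem x) :
    Summable (fun k => ‖σ k * x k‖ ^ (n : ℝ)) ∧
    (∑' k, ‖σ k * x k‖ ^ (n : ℝ)) ^ (1 / (n : ℝ)) ≤ C ^ (1 / (n : ℝ)) * E.nrm x := by
  have hn' : (n : ℝ) ≠ 0 := Nat.cast_ne_zero.mpr hn.ne'
  have hgr : (fun k => ‖σ k * x k‖ ^ (n : ℝ)) = fun k => ‖σ k * x k‖ ^ n :=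
    funext fun k => Real.rpow_natCast _ n
  set lam : ℕ → ℂ := fun k => if σ k * x k = 0 then 1 else (‖σ k * x k‖ : ℂ) / (σ k * x k)
    with hlamdef
  have hlam1 : ∀ k, ‖lam k‖ = 1 := by
    intro k
    by_cases h : σ k * x k = 0
    · simp only [hlamdef]
      rw [if_pos h, norm_one]
    · simp only [hlamdef, if_neg h]
      rw [norm_div, Complex.norm_real, norm_norm, div_self (norm_ne_zero_iff.mpr h)]
  have key : ∀ k, σ k * (lam k * x k) = (‖σ k * x k‖ : ℂ) := by
    intro k
    by_cases h : σ k * x k = 0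
    · simp [hlamdef, h, ← mul_assoc]
    · simp only [hlamdef, if_neg h]
      field_simp
      have h1 := left_ne_zero_of_mul h
      have h2 := right_ne_zero_of_mul h
      field_simp
  have termF : ∀ k, α k * (lam k * x k) ^ n = ((‖σ k * x k‖ ^ n : ℝ) : ℂ) := by
    intro k
    rw [← hσ k, ← mul_pow, key k, Complex.ofReal_pow]
  have hprodc : ∀ c : ℂ, (∏ _i : Fin n, c) = c ^ n := by
    intro c; simp
  -- partial sum bound
  have hpart : ∀ u : Finset ℕ, ∑ k ∈ u, ‖σ k * x k‖ ^ n ≤ C * E.nrm x ^ n := by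
    intro u
    set yu : ℕ → ℂ := fun k => if k ∈ u then lam k * x k else 0 with hyudef
    have hsolid := E.solid yu x (fun k => by
      by_cases hk : k ∈ u
      · simp [hyudef, hk, norm_mul, hlam1 k]
      · simp [hyudef, hk]) hx
    have hfun : (fun k => α k * ∏ _i : Fin n, yu k)
        = fun k => if k ∈ u then ((‖σ k * x k‖ ^ n : ℝ) : ℂ) else 0 := by
      funext k
      rw [hprodc]
      by_cases hk : k ∈ u
      · simp only [hyudef, if_pos hk, termF k]
      · simp [hyudef, if_neg hk, zero_pow hn.ne']
    have htsum : ∑' k, α k * ∏ _i : Fin n, yu k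
        = ((∑ k ∈ u, ‖σ k * x k‖ ^ n : ℝ) : ℂ) := by
      rw [hfun, tsum_eq_sum (s := u) (fun k hk => if_neg hk)]
      push_cast
      exact Finset.sum_congr rfl fun k hk => if_pos hk
    have := hA (fun _ => yu) (fun _ => hsolid.1)
    rw [htsum, Complex.norm_real, Real.norm_of_nonneg
      (Finset.sum_nonneg fun k _ => pow_nonneg (norm_nonneg _) n), Finset.prod_const,
      Finset.card_univ, Fintype.card_fin] at this
    calc ∑ k ∈ u, ‖σ k * x k‖ ^ n ≤ C * E.nrm yu ^ n := this
      _ ≤ C * E.nrm x ^ n := by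
          exact mul_le_mul_of_nonneg_left
            (pow_le_pow_left₀ (E.nrm_nonneg _) hsolid.2 n) hC
  have hsumm : Summable fun k => ‖σ k * x k‖ ^ (n : ℝ) := by
    rw [hgr]
    exact summable_of_sum_le (fun k => by positivity) hpart
  refine ⟨hsumm, ?_⟩
  -- full bound
  have hsolid := E.solid (fun k => lam k * x k) x
    (fun k => by simp [norm_mul, hlam1 k]) hx
  have hfun : (fun k => α k * ∏ _i : Fin n, (lam k * x k))
      = fun k => ((‖σ k * x k‖ ^ n : ℝ) : ℂ) := by
    funext k
    rw [hprodc]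
    exact termF k
  have htsum : ∑' k, α k * ∏ _i : Fin n, (lam k * x k)
      = ((∑' k, ‖σ k * x k‖ ^ n : ℝ) : ℂ) := by
    rw [hfun, Complex.ofReal_tsum]
  have hmain := hA (fun _ => fun k => lam k * x k) (fun _ => hsolid.1)
  rw [htsum, Complex.norm_real, Real.norm_of_nonneg
    (tsum_nonneg fun k => pow_nonneg (norm_nonneg _) n), Finset.prod_const,
    Finset.card_univ, Fintype.card_fin] at hmain
  have htle : ∑' k, ‖σ k * x k‖ ^ n ≤ C * E.nrm x ^ n :=
    hmain.trans (mul_le_mul_of_nonneg_left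
      (pow_le_pow_left₀ (E.nrm_nonneg _) hsolid.2 n) hC)
  rw [hgr]
  calc (∑' k, ‖σ k * x k‖ ^ n) ^ (1 / (n : ℝ))
      ≤ (C * E.nrm x ^ n) ^ (1 / (n : ℝ)) :=
        Real.rpow_le_rpow (tsum_nonneg fun k => pow_nonneg (norm_nonneg _) n) htle (by positivity)
    _ = C ^ (1 / (n : ℝ)) * E.nrm x := by
        rw [Real.mul_rpow hC (pow_nonneg (E.nrm_nonneg x) n), ← Real.rpow_natCast (E.nrm x) n,
          ← Real.rpow_mul (E.nrm_nonneg x), mul_one_div, div_self hn', Real.rpow_one]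

private lemma aux_keyBsum (E : SymmBSS) (n : ℕ) (hn : 0 < n) (σ : ℕ → ℂ)
    (C : ℝ) (hC : 0 ≤ C)
    (hB : ∀ x : ℕ → ℂ, E.mem x →
      (∑' k, ‖σ k * x k‖ ^ (n : ℝ)) ^ (1 / (n : ℝ)) ≤ C * E.nrm x)
    (x : ℕ → ℂ) (hx : E.mem x) :
    Summable (fun k => ‖σ k * x k‖ ^ (n : ℝ)) ∧
    ∑' k, ‖σ k * x k‖ ^ (n : ℝ) ≤ (C * E.nrm x) ^ n := by
  have hn' : (n : ℝ) ≠ 0 := Nat.cast_ne_zero.mpr hn.ne'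
  have hup : ∀ a b : ℝ, 0 ≤ a → 0 ≤ b → a ^ (1 / (n : ℝ)) ≤ b → a ≤ b ^ n := by
    intro a b ha hb h
    have h2 := Real.rpow_le_rpow (Real.rpow_nonneg ha _) h (Nat.cast_nonneg n)
    rwa [← Real.rpow_mul ha, one_div, inv_mul_cancel₀ hn', Real.rpow_one,
      Real.rpow_natCast] at h2
  have hCx : 0 ≤ C * E.nrm x := mul_nonneg hC (E.nrm_nonneg x)
  have hpart : ∀ u : Finset ℕ, ∑ k ∈ u, ‖σ k * x k‖ ^ (n : ℝ) ≤ (C * E.nrm x) ^ n := by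
    intro u
    set xu : ℕ → ℂ := fun k => if k ∈ u then x k else 0 with hxudef
    have hsolid := E.solid xu x (fun k => by
      by_cases hk : k ∈ u <;> simp [hxudef, hk]) hx
    have hfun : (fun k => ‖σ k * xu k‖ ^ (n : ℝ))
        = fun k => if k ∈ u then ‖σ k * x k‖ ^ (n : ℝ) else 0 := by
      funext k
      by_cases hk : k ∈ u
      · simp [hxudef, hk]
      · simp [hxudef, hk, Real.zero_rpow hn']
    have htsum : ∑' k, ‖σ k * xu k‖ ^ (n : ℝ) = ∑ k ∈ u, ‖σ k * x k‖ ^ (n : ℝ) := by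
      rw [hfun, tsum_eq_sum (fun k hk => if_neg hk)]
      exact Finset.sum_congr rfl fun k hk => if_pos hk
    have hb := hB xu hsolid.1
    rw [htsum] at hb
    have h1 := hup _ _ (Finset.sum_nonneg fun k _ => Real.rpow_nonneg (norm_nonneg _) _)
      (mul_nonneg hC (E.nrm_nonneg _)) hb
    exact h1.trans (pow_le_pow_left₀ (mul_nonneg hC (E.nrm_nonneg _))
      (mul_le_mul_of_nonneg_left hsolid.2 hC) n)
  have hsumm : Summable (fun k => ‖σ k * x k‖ ^ (n : ℝ)) :=
    summable_of_sum_le (fun k => Real.rpow_nonneg (norm_nonneg _) _) hpart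
  exact ⟨hsumm, hup _ _ (tsum_nonneg fun k => Real.rpow_nonneg (norm_nonneg _) _)
    hCx (hB x hx)⟩

private lemma aux_keyB (E : SymmBSS) (n : ℕ) (hn : 0 < n) (α σ : ℕ → ℂ)
    (hσ : ∀ k, σ k ^ n = α k) (C : ℝ) (hC : 0 ≤ C)
    (hB : ∀ x : ℕ → ℂ, E.mem x →
      (∑' k, ‖σ k * x k‖ ^ (n : ℝ)) ^ (1 / (n : ℝ)) ≤ C * E.nrm x)
    (x : Fin n → ℕ → ℂ) (hx : ∀ i, E.mem (x i)) :
    Summable (fun k => ‖α k‖ * ∏ i, ‖x i k‖) ∧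
    ‖∑' k, α k * ∏ i, x i k‖ ≤ C ^ n * ∏ i, E.nrm (x i) := by
  have hn' : (n : ℝ) ≠ 0 := Nat.cast_ne_zero.mpr hn.ne'
  have hh : ∀ (y : Fin n → ℕ → ℂ) (k : ℕ),
      ‖α k‖ * ∏ i, ‖y i k‖ = ∏ i, ‖σ k * y i k‖ := by
    intro y k
    rw [← hσ k, norm_pow]
    simp only [norm_mul, Finset.prod_mul_distrib, Finset.prod_const,
      Finset.card_univ, Fintype.card_fin]
  have hAM : ∀ (y : Fin n → ℕ → ℂ) (k : ℕ),
      ‖α k‖ * ∏ i, ‖y i k‖ ≤ (1 / (n : ℝ)) * ∑ i, ‖σ k * y i k‖ ^ (n : ℝ) := by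
    intro y k
    rw [hh y k]
    have h1 := aux_amgm n hn (fun i => ‖σ k * y i k‖) (fun i => norm_nonneg _)
    have h2 : ∑ i : Fin n, ‖σ k * y i k‖ ^ n = ∑ i : Fin n, ‖σ k * y i k‖ ^ (n : ℝ) :=
      Finset.sum_congr rfl fun i _ => (Real.rpow_natCast _ n).symm
    rw [← h2]
    exact h1
  have hnn : ∀ (y : Fin n → ℕ → ℂ) (k : ℕ), 0 ≤ ‖α k‖ * ∏ i, ‖y i k‖ :=
    fun y k => mul_nonneg (norm_nonneg _) (Finset.prod_nonneg fun i _ => norm_nonneg _)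
  have hsumh : ∀ (y : Fin n → ℕ → ℂ), (∀ i, E.mem (y i)) →
      Summable (fun k => ‖α k‖ * ∏ i, ‖y i k‖) := by
    intro y hy
    have hs : Summable (fun k => (1 / (n : ℝ)) * ∑ i, ‖σ k * y i k‖ ^ (n : ℝ)) :=
      (summable_sum fun i _ => (aux_keyBsum E n hn σ C hC hB (y i) (hy i)).1).mul_left _
    exact Summable.of_nonneg_of_le (hnn y) (hAM y) hs
  refine ⟨hsumh x hx, ?_⟩
  have hfn : (fun k => ‖α k * ∏ i, x i k‖) = fun k => ‖α k‖ * ∏ i, ‖x i k‖ := by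
    funext k
    rw [norm_mul, norm_prod]
  have hnormle : ‖∑' k, α k * ∏ i, x i k‖ ≤ ∑' k, ‖α k‖ * ∏ i, ‖x i k‖ := by
    have := norm_tsum_le_tsum_norm (f := fun k => α k * ∏ i, x i k) (by rw [hfn]; exact hsumh x hx)
    rwa [hfn] at this
  by_cases hz : ∃ j, E.nrm (x j) = 0
  · obtain ⟨j, hj⟩ := hz
    have hj0 : ∑' k, ‖σ k * x j k‖ ^ (n : ℝ) = 0 := by
      have h1 := hB (x j) (hx j)
      rw [hj, mul_zero] at h1
      by_contra hne
      have hpos : 0 < ∑' k, ‖σ k * x j k‖ ^ (n : ℝ) :=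
        lt_of_le_of_ne (tsum_nonneg fun k => Real.rpow_nonneg (norm_nonneg _) _) (Ne.symm hne)
      exact absurd h1 (not_le.mpr (Real.rpow_pos_of_pos hpos _))
    have hterm : ∀ k, ‖σ k * x j k‖ = 0 := by
      intro k
      have h2 := Summable.le_tsum (aux_keyBsum E n hn σ C hC hB (x j) (hx j)).1 k
        (fun m _ => Real.rpow_nonneg (norm_nonneg _) _)
      rw [hj0] at h2
      have h3 : ‖σ k * x j k‖ ^ (n : ℝ) = 0 :=
        le_antisymm h2 (Real.rpow_nonneg (norm_nonneg _) _)
      rw [Real.rpow_natCast] at h3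
      exact (pow_eq_zero_iff hn.ne').mp h3
    have h0 : (fun k => ‖α k‖ * ∏ i, ‖x i k‖) = fun _ => (0 : ℝ) := by
      funext k
      rw [hh x k]
      exact Finset.prod_eq_zero (Finset.mem_univ j) (hterm k)
    rw [h0, tsum_zero] at hnormle
    refine hnormle.trans ?_
    rw [Finset.prod_eq_zero (Finset.mem_univ j) hj, mul_zero]
  · push_neg at hz
    have hpos : ∀ i, 0 < E.nrm (x i) := fun i => lt_of_le_of_ne (E.nrm_nonneg _) (Ne.symm (hz i))
    set y : Fin n → ℕ → ℂ := fun i => ((E.nrm (x i) : ℂ))⁻¹ • x i with hydef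
    have hyi : ∀ i, E.mem (y i) ∧ E.nrm (y i) = 1 := by
      intro i
      have hs := E.smul_mem ((E.nrm (x i) : ℂ))⁻¹ (x i) (hx i)
      refine ⟨hs.1, ?_⟩
      rw [hs.2, norm_inv, Complex.norm_real, Real.norm_of_nonneg (E.nrm_nonneg _),
        inv_mul_cancel₀ (hz i)]
    have hyk : ∀ i k, ‖y i k‖ = (E.nrm (x i))⁻¹ * ‖x i k‖ := by
      intro i k
      simp only [hydef, Pi.smul_apply, smul_eq_mul, norm_mul, norm_inv,
        Complex.norm_real, Real.norm_of_nonneg (E.nrm_nonneg (x i))]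
    have hprodpos : (0:ℝ) < ∏ i, E.nrm (x i) := Finset.prod_pos fun i _ => hpos i
    have hpt : ∀ k, ‖α k‖ * ∏ i, ‖x i k‖
        = (∏ i, E.nrm (x i)) * (‖α k‖ * ∏ i, ‖y i k‖) := by
      intro k
      have : ∏ i, ‖y i k‖ = (∏ i, E.nrm (x i))⁻¹ * ∏ i, ‖x i k‖ := by
        simp only [hyk, Finset.prod_mul_distrib, Finset.prod_inv_distrib]
      rw [this]
      field_simp
    have hbound : ∀ i, ∑' k, ‖σ k * y i k‖ ^ (n : ℝ) ≤ C ^ n := by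
      intro i
      have := (aux_keyBsum E n hn σ C hC hB (y i) (hyi i).1).2
      rwa [(hyi i).2, mul_one] at this
    have hsub : ∑' k, ‖α k‖ * ∏ i, ‖y i k‖ ≤ C ^ n := by
      have hs2 : Summable (fun k => (1 / (n : ℝ)) * ∑ i, ‖σ k * y i k‖ ^ (n : ℝ)) :=
        (summable_sum fun i _ => (aux_keyBsum E n hn σ C hC hB (y i) (hyi i).1).1).mul_left _
      calc ∑' k, ‖α k‖ * ∏ i, ‖y i k‖
          ≤ ∑' k, (1 / (n : ℝ)) * ∑ i, ‖σ k * y i k‖ ^ (n : ℝ) :=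
            Summable.tsum_le_tsum (hAM y) (hsumh y fun i => (hyi i).1) hs2
        _ = (1 / (n : ℝ)) * ∑ i, ∑' k, ‖σ k * y i k‖ ^ (n : ℝ) := by
            rw [tsum_mul_left, Summable.tsum_finsetSum fun i _ => (aux_keyBsum E n hn σ C hC hB (y i) (hyi i).1).1]
        _ ≤ (1 / (n : ℝ)) * ∑ _i : Fin n, C ^ n := by
            refine mul_le_mul_of_nonneg_left (Finset.sum_le_sum fun i _ => hbound i) (by positivity)
        _ = C ^ n := by
            rw [Finset.sum_const, Finset.card_univ, Fintype.card_fin, nsmul_eq_mul]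
            field_simp
    have htsum_eq : ∑' k, ‖α k‖ * ∏ i, ‖x i k‖
        = (∏ i, E.nrm (x i)) * ∑' k, ‖α k‖ * ∏ i, ‖y i k‖ := by
      rw [← tsum_mul_left]
      exact tsum_congr hpt
    refine hnormle.trans ?_
    rw [htsum_eq, mul_comm (C ^ n)]
    exact mul_le_mul_of_nonneg_left hsub hprodpos.le


/-- `T_α` bounded (diagonal `n`-linear form on `E`) iff the diagonal operator
`D_σ : E → ℓⁿ`, `D_σ(x) = (σ(k)x(k))ₖ` with `σ` a coordinatewise `n`-th root of `α`, is
bounded; moreover `‖T_α‖ = ‖D_σ‖ⁿ` (norms expressed as infima of admissible constants). -/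
theorem stmt10 (E : SymmBSS) (n : ℕ) (hn : 0 < n) (α σ : ℕ → ℂ)
    (hσ : ∀ k, σ k ^ n = α k) (hσmod : ∀ k, ‖σ k‖ = ‖α k‖ ^ (1 / (n : ℝ)))
    (hα : BddAbove (Set.range fun k => ‖α k‖)) :
    ((∃ C : ℝ, 0 ≤ C ∧ ∀ x : Fin n → ℕ → ℂ, (∀ i, E.mem (x i)) →
        Summable (fun k => ‖α k‖ * ∏ i, ‖x i k‖) ∧
        ‖∑' k, α k * ∏ i, x i k‖ ≤ C * ∏ i, E.nrm (x i)) ↔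
      (∃ C : ℝ, 0 ≤ C ∧ ∀ x : ℕ → ℂ, E.mem x →
        Summable (fun k => ‖σ k * x k‖ ^ (n : ℝ)) ∧
        (∑' k, ‖σ k * x k‖ ^ (n : ℝ)) ^ (1 / (n : ℝ)) ≤ C * E.nrm x))
    ∧ sInf {C : ℝ | 0 ≤ C ∧ ∀ x : Fin n → ℕ → ℂ, (∀ i, E.mem (x i)) →
          ‖∑' k, α k * ∏ i, x i k‖ ≤ C * ∏ i, E.nrm (x i)}
      = (sInf {C : ℝ | 0 ≤ C ∧ ∀ x : ℕ → ℂ, E.mem x →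
          (∑' k, ‖σ k * x k‖ ^ (n : ℝ)) ^ (1 / (n : ℝ)) ≤ C * E.nrm x}) ^ n := by
  have hn' : (n : ℝ) ≠ 0 := Nat.cast_ne_zero.mpr hn.ne'
  constructor
  · constructor
    · rintro ⟨C, hC0, hC⟩
      exact ⟨C ^ (1 / (n : ℝ)), Real.rpow_nonneg hC0 _,
        fun x hx => aux_keyA E n hn α σ hσ C hC0 (fun z hz => (hC z hz).2) x hx⟩
    · rintro ⟨C, hC0, hC⟩
      exact ⟨C ^ n, pow_nonneg hC0 n,
        fun x hx => aux_keyB E n hn α σ hσ C hC0 (fun z hz => (hC z hz).2) x hx⟩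
  · set SA := {C : ℝ | 0 ≤ C ∧ ∀ x : Fin n → ℕ → ℂ, (∀ i, E.mem (x i)) →
        ‖∑' k, α k * ∏ i, x i k‖ ≤ C * ∏ i, E.nrm (x i)} with hSAdef
    set SB := {C : ℝ | 0 ≤ C ∧ ∀ x : ℕ → ℂ, E.mem x →
        (∑' k, ‖σ k * x k‖ ^ (n : ℝ)) ^ (1 / (n : ℝ)) ≤ C * E.nrm x} with hSBdef
    have hAB : ∀ C ∈ SA, C ^ (1 / (n : ℝ)) ∈ SB := fun C hC =>
      ⟨Real.rpow_nonneg hC.1 _, fun x hx => (aux_keyA E n hn α σ hσ C hC.1 hC.2 x hx).2⟩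
    have hBA : ∀ C ∈ SB, C ^ n ∈ SA := fun C hC =>
      ⟨pow_nonneg hC.1 n, fun x hx => (aux_keyB E n hn α σ hσ C hC.1 hC.2 x hx).2⟩
    have hbddA : BddBelow SA := ⟨0, fun C hC => hC.1⟩
    have hbddB : BddBelow SB := ⟨0, fun C hC => hC.1⟩
    by_cases hne : SB.Nonempty
    · obtain ⟨D, hD⟩ := hne
      have hneA : SA.Nonempty := ⟨D ^ n, hBA D hD⟩
      have h0A : 0 ≤ sInf SA := le_csInf hneA fun C hC => hC.1
      have h0B : 0 ≤ sInf SB := le_csInf ⟨D, hD⟩ fun C hC => hC.1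
      apply le_antisymm
      · have h1 : (sInf SA) ^ (1 / (n : ℝ)) ≤ sInf SB := by
          refine le_csInf ⟨D, hD⟩ fun C hC => ?_
          have h2 : sInf SA ≤ C ^ n := csInf_le hbddA (hBA C hC)
          calc (sInf SA) ^ (1 / (n : ℝ)) ≤ (C ^ n) ^ (1 / (n : ℝ)) :=
                Real.rpow_le_rpow h0A h2 (by positivity)
            _ = C := by
                rw [← Real.rpow_natCast C n, ← Real.rpow_mul hC.1, mul_one_div,
                  div_self hn', Real.rpow_one]
        calc sInf SA = ((sInf SA) ^ (1 / (n : ℝ))) ^ n := by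
              rw [← Real.rpow_natCast ((sInf SA) ^ (1 / (n : ℝ))) n, ← Real.rpow_mul h0A,
                one_div, inv_mul_cancel₀ hn', Real.rpow_one]
          _ ≤ (sInf SB) ^ n := pow_le_pow_left₀ (Real.rpow_nonneg h0A _) h1 n
      · refine le_csInf hneA fun C hC => ?_
        have h2 : sInf SB ≤ C ^ (1 / (n : ℝ)) := csInf_le hbddB (hAB C hC)
        calc (sInf SB) ^ n ≤ (C ^ (1 / (n : ℝ))) ^ n := pow_le_pow_left₀ h0B h2 n
          _ = C := by
              rw [← Real.rpow_natCast (C ^ (1 / (n : ℝ))) n, ← Real.rpow_mul hC.1,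
                one_div, inv_mul_cancel₀ hn', Real.rpow_one]
    · have hneA : ¬ SA.Nonempty := fun ⟨C, hC⟩ => hne ⟨C ^ (1 / (n : ℝ)), hAB C hC⟩
      rw [Set.not_nonempty_iff_eq_empty] at hne hneA
      rw [hneA, hne, Real.sInf_empty, zero_pow hn.ne']
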